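/- Let C_d and C_{d'} be the full-support baker's maps of 𝔠ⁿ for distinct indices 2 ≤ d, d' ≤ n. Then the conjugate of the partially-supported baker's map satisfies C_{d'}⁻¹ ∘ B_d(0₁) ∘ C_{d'} = B_d(0_{d'}), where B_d(0_{d'}) is the index-d baker's map supported on the set of points whose d'-th coordinate begins with 0. Similarly C_{d'}⁻¹ ∘ B_d(1₁) ∘ C_{d'} = B_d(1_{d'}). -/
import Mathlib


open scoped Classical

/-- Finite words over the alphabet `{0,1}`. -/
abbrev Word := List Bool
/-- Cantor space: infinite `{0,1}`-sequences. -/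
abbrev Cantor := ℕ → Bool

/-- Concatenate a finite word with an infinite sequence. -/
def catW (α : Word) (w : Cantor) : Cantor :=
  fun i => if h : i < α.length then α.get ⟨i, h⟩ else w (i - α.length)

/-- The basic open set of sequences having `α` as a prefix. -/
def GammaW (α : Word) : Set Cantor := Set.range (catW α)

/-- Incomparability of words: neither is a prefix of the other. -/
def IncompW (α β : Word) : Prop := ¬ α <+: β ∧ ¬ β <+: α

/-- Addresses: `n`-tuples of finite words. -/
abbrev Addr (n : ℕ) := Fin n → Word
/-- `n`-dimensional Cantor space. -/
abbrev CantorN (n : ℕ) := Fin n → Cantor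

/-- The basic open set in `𝔠ⁿ` indexed by the address `α`. -/
def GammaN {n : ℕ} (α : Addr n) : Set (CantorN n) :=
  { w | ∀ d, w d ∈ GammaW (α d) }

/-- Incomparability of addresses: some coordinate pair is incomparable. -/
def IncompA {n : ℕ} (α β : Addr n) : Prop := ∃ d, IncompW (α d) (β d)

/-- Drop the first `k` symbols of an infinite sequence. -/
def dropSeq (k : ℕ) (w : Cantor) : Cantor := fun i => w (i + k)

/-- Prepend the address `α` coordinatewise. -/
def catA {n : ℕ} (α : Addr n) (u : CantorN n) : CantorN n :=
  fun d => catW (α d) (u d)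

/-- Remove the prefix `α` coordinatewise. -/
def dropA {n : ℕ} (α : Addr n) (w : CantorN n) : CantorN n :=
  fun d => dropSeq ((α d).length) (w d)

/-- The transposition `⟨α β⟩` of `𝔠ⁿ`: exchanges `Γ(α)` and `Γ(β)` by prefix
substitution and fixes all other points. -/
noncomputable def swapN {n : ℕ} (α β : Addr n) : CantorN n → CantorN n :=
  fun w =>
    if w ∈ GammaN α then catA β (dropA α w)
    else if w ∈ GammaN β then catA α (dropA β w)
    else w

/-- Append the symbol `x` to the `d`-th coordinate of the address `α`. -/
def appA {n : ℕ} (α : Addr n) (d : Fin n) (x : Bool) : Addr n :=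
  Function.update α d (α d ++ [x])

/-- Append the word `u` to the `d`-th coordinate of the address `α`. -/
def appW {n : ℕ} (α : Addr n) (d : Fin n) (u : Word) : Addr n :=
  Function.update α d (α d ++ u)

/-- Coordinatewise concatenation of addresses. -/
def concatA {n : ℕ} (α η : Addr n) : Addr n := fun d => α d ++ η d

/-- The address with word `u` in coordinate `d` and empty words elsewhere. -/
def unitA {n : ℕ} (d : Fin n) (u : Word) : Addr n :=
  fun e => if e = d then u else []

/-- Prepend a letter to an infinite sequence. -/
def consSeq (b : Bool) (w : Cantor) : Cantor :=
  fun i => match i with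
  | 0 => b
  | i + 1 => w i

/-- The full-support baker's map: moves the first letter of coordinate `1`
to the front of coordinate `d`. -/
def bakerFull {n : ℕ} [NeZero n] (d : Fin n) : CantorN n → CantorN n :=
  fun w e =>
    if e = 0 then dropSeq 1 (w 0)
    else if e = d then consSeq (w 0 0) (w d)
    else w e

/-- The inverse of the full-support baker's map: moves the first letter of
coordinate `d` to the front of coordinate `1`. -/
def invBakerFull {n : ℕ} [NeZero n] (d : Fin n) : CantorN n → CantorN n :=
  fun w e =>
    if e = 0 then consSeq (w d 0) (w 0)
    else if e = d then dropSeq 1 (w d)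
    else w e

/-- The index-`d` baker's map with support `Γ(α)`: sends `α.x₁.u ↦ α.x_d.u`
and fixes all points outside `Γ(α)`. -/
noncomputable def bakerN {n : ℕ} [NeZero n] (d : Fin n) (α : Addr n) :
    CantorN n → CantorN n :=
  fun w => if w ∈ GammaN α then catA α (bakerFull d (dropA α w)) else w

/-- The inverse of the index-`d` baker's map with support `Γ(α)`. -/
noncomputable def invBakerN {n : ℕ} [NeZero n] (d : Fin n) (α : Addr n) :
    CantorN n → CantorN n :=
  fun w => if w ∈ GammaN α then catA α (invBakerFull d (dropA α w)) else w

/-- The partial prefix-substitution action of the symbol `⟨γ δ⟩` on addresses,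
as a relation: `ActRel γ δ ζ ζ'` holds iff `ζ • ⟨γ δ⟩` is defined and
equals `ζ'`. -/
def ActRel {n : ℕ} (γ δ ζ ζ' : Addr n) : Prop :=
  (∃ η, ζ = concatA γ η ∧ ζ' = concatA δ η) ∨
  (∃ η, ζ = concatA δ η ∧ ζ' = concatA γ η) ∨
  (IncompA ζ γ ∧ IncompA ζ δ ∧ ζ' = ζ)

/-- Conjugating the baker's map B_d(x₁) by the full-support baker's map
C_{d'} (in the right-action convention, so as a function this conjugate is
`C_{d'} ∘ B_d(x₁) ∘ C_{d'}⁻¹`) gives the baker's map B_d(x_{d'}). -/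

lemma catW_nil (u : Cantor) : catW [] u = u := by
  funext i; simp [catW]

lemma catW_single (x : Bool) (u : Cantor) : catW [x] u = consSeq x u := by
  funext i; cases i <;> simp [catW, consSeq]

lemma dropSeq_zero (u : Cantor) : dropSeq 0 u = u := by
  funext i; simp [dropSeq]

lemma dropSeq_one_consSeq (b : Bool) (u : Cantor) : dropSeq 1 (consSeq b u) = u := by
  funext i; simp [dropSeq, consSeq]

lemma consSeq_head_tail (u : Cantor) : consSeq (u 0) (dropSeq 1 u) = u := by
  funext i; cases i <;> simp [dropSeq, consSeq]

lemma mem_GammaW_nil (w : Cantor) : w ∈ GammaW [] := ⟨w, catW_nil w⟩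

lemma mem_GammaW_single {w : Cantor} {x : Bool} : w ∈ GammaW [x] ↔ w 0 = x := by
  constructor
  · rintro ⟨u, rfl⟩; simp [catW_single, consSeq]
  · intro h
    exact ⟨dropSeq 1 w, by rw [catW_single]; rw [← h]; exact consSeq_head_tail w⟩

lemma mem_GammaN_unit {n : ℕ} {e : Fin n} {x : Bool} {w : CantorN n} :
    w ∈ GammaN (unitA e [x]) ↔ w e 0 = x := by
  constructor
  · intro h
    have := h e
    simpa [unitA, mem_GammaW_single] using this
  · intro h c
    by_cases hc : c = e
    · subst hc; simpa [unitA, mem_GammaW_single] using h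
    · simpa [unitA, hc] using mem_GammaW_nil (w c)

lemma catA_unit {n : ℕ} (e : Fin n) (x : Bool) (v : CantorN n) (c : Fin n) :
    catA (unitA e [x]) v c = if c = e then consSeq x (v c) else v c := by
  by_cases h : c = e <;> simp [catA, unitA, h, catW_single, catW_nil]

lemma dropA_unit {n : ℕ} (e : Fin n) (x : Bool) (v : CantorN n) (c : Fin n) :
    dropA (unitA e [x]) v c = if c = e then dropSeq 1 (v c) else v c := by
  by_cases h : c = e <;> simp [dropA, unitA, h, dropSeq_zero]

lemma key_conj (n : ℕ) [NeZero n] (d d' : Fin n)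
    (hd : d ≠ 0) (hd' : d' ≠ 0) (hdd' : d ≠ d') (x : Bool) :
    bakerFull d' ∘ bakerN d (unitA 0 [x]) ∘ invBakerFull d' =
        bakerN d (unitA d' [x]) := by
  funext w
  have hu0 : invBakerFull d' w 0 = consSeq (w d' 0) (w 0) := by simp [invBakerFull]
  have hud' : invBakerFull d' w d' = dropSeq 1 (w d') := by simp [invBakerFull, hd']
  have hue : ∀ e : Fin n, e ≠ 0 → e ≠ d' → invBakerFull d' w e = w e := by
    intro e h1 h2; simp [invBakerFull, h1, h2]
  have hud : invBakerFull d' w d = w d := hue d hd hdd'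
  by_cases hx : w d' 0 = x
  · have hmem : invBakerFull d' w ∈ GammaN (unitA 0 [x]) := by
      rw [mem_GammaN_unit, hu0]; simpa [consSeq] using hx
    have hmem' : w ∈ GammaN (unitA d' [x]) := mem_GammaN_unit.mpr hx
    simp only [Function.comp_apply, bakerN, if_pos hmem, if_pos hmem']
    funext c
    by_cases hc0 : c = 0
    · subst hc0
      simp [bakerFull, catA_unit, dropA_unit, Ne.symm hd, Ne.symm hd', hu0,
        dropSeq_one_consSeq, consSeq]
    · by_cases hcd' : c = d'
      · subst hcd'
        simp [bakerFull, catA_unit, dropA_unit, hd', Ne.symm hd', Ne.symm hdd',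
          hdd', hud', hu0, dropSeq_one_consSeq, consSeq, hx]
      · by_cases hcd : c = d
        · subst hcd
          simp [bakerFull, catA_unit, dropA_unit, hd, hdd', Ne.symm hd',
            Ne.symm hd, hud, hu0, dropSeq_one_consSeq, consSeq]
        · simp [bakerFull, catA_unit, dropA_unit, hc0, hcd, hcd',
            hue c hc0 hcd']
  · have hmem : invBakerFull d' w ∉ GammaN (unitA 0 [x]) := by
      rw [mem_GammaN_unit, hu0]; simpa [consSeq] using hx
    have hmem' : w ∉ GammaN (unitA d' [x]) := fun h => hx (mem_GammaN_unit.mp h)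
    simp only [Function.comp_apply, bakerN, if_neg hmem, if_neg hmem']
    funext c
    by_cases hc0 : c = 0
    · subst hc0
      simp [bakerFull, Ne.symm hd', hu0, dropSeq_one_consSeq]
    · by_cases hcd' : c = d'
      · subst hcd'
        simp [bakerFull, hd', hu0, hud', consSeq, consSeq_head_tail]
      · simp [bakerFull, hc0, hcd', hue c hc0 hcd']

theorem stmt15 (n : ℕ) [NeZero n] (hn : 2 ≤ n) (d d' : Fin n)
    (hd : d ≠ 0) (hd' : d' ≠ 0) (hdd' : d ≠ d') :
    bakerFull d' ∘ bakerN d (unitA 0 [false]) ∘ invBakerFull d' =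
        bakerN d (unitA d' [false]) ∧
    bakerFull d' ∘ bakerN d (unitA 0 [true]) ∘ invBakerFull d' =
        bakerN d (unitA d' [true]) := by
  exact ⟨key_conj n d d' hd hd' hdd' false, key_conj n d d' hd hd' hdd' true⟩
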